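/- arXiv:2504.17442 — 2 statements merged into one kernel-verified Lean document; each statement's English description precedes it below -/
import Mathlib

section
/- With the wavelet transform W_φ(f)(x) = ⟨f, U_x φ⟩ associated to a projective unitary representation with cocycle m, for any φ₀, φ₁, φ₂, φ₃ ∈ H satisfying the Godement orthogonality relation ∫_Ξ W_{ψ₀}(f)(x) · conj(W_{ψ₁}(g)(x)) dx = ⟨f, g⟩ ⟨ψ₁, ψ₀⟩, one has the twisted convolution identity W_{φ₀}(φ₃) ∗' W_{φ₁}(φ₂) = ⟨φ₂, φ₀⟩ · W_{φ₁}(φ₃). -/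
open MeasureTheory ContinuousLinearMap

/-- The twisted convolution identity for wavelet transforms:
`W_{φ₀}(φ₃) ∗' W_{φ₁}(φ₂) = ⟨φ₂, φ₀⟩ · W_{φ₁}(φ₃)`, assuming Godement's
orthogonality relation holds (Haar measure normalized so the constant is 1).
Here `W ψ g x = ⟨g, U_x ψ⟩`, which in Mathlib conventions (inner antilinear in the
first argument) reads `inner (U x ψ) g`. -/
theorem wavelet_twisted_convolution {Ξ : Type*} [CommGroup Ξ] [MeasurableSpace Ξ]
    {H : Type*} [NormedAddCommGroup H] [InnerProductSpace ℂ H] [CompleteSpace H]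
    (μ : Measure Ξ)
    (m : Ξ → Ξ → ℂ) (hnorm : ∀ x y, ‖m x y‖ = 1)
    (hcoc : ∀ x y z, m (x * y) z * m x y = m x (y * z) * m y z)
    (he : m 1 1 = 1) (hminv : ∀ x y, m x y = m x⁻¹ y⁻¹)
    (U : Ξ → H →L[ℂ] H)
    (hunit : ∀ x, adjoint (U x) ∘L U x = 1 ∧ U x ∘L adjoint (U x) = 1)
    (hproj : ∀ x y, U x ∘L U y = m x y • U (x * y))
    (W : H → H → Ξ → ℂ)
    (hW : ∀ ψ g x, W ψ g x = inner ℂ (U x ψ) g)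
    -- Godement orthogonality: ∫ W_{ψ₀}(f) conj(W_{ψ₁}(g)) = ⟨f,g⟩⟨ψ₁,ψ₀⟩
    (hGod : ∀ ψ₀ ψ₁ f g : H,
      ∫ x, W ψ₀ f x * (starRingEnd ℂ) (W ψ₁ g x) ∂μ
        = (inner ℂ g f : ℂ) * (inner ℂ ψ₀ ψ₁ : ℂ))
    -- integrability so that the twisted convolution is defined
    (φ₀ φ₁ φ₂ φ₃ : H)
    (hint : ∀ x : Ξ, Integrable
      (fun y => W φ₀ φ₃ y * W φ₁ φ₂ (y⁻¹ * x) * m y (y⁻¹ * x)) μ) :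
    ∀ x : Ξ, ∫ y, W φ₀ φ₃ y * W φ₁ φ₂ (y⁻¹ * x) * m y (y⁻¹ * x) ∂μ
      = (inner ℂ φ₀ φ₂ : ℂ) * W φ₁ φ₃ x := by
  intro x
  have key : ∀ y, W φ₀ φ₃ y * W φ₁ φ₂ (y⁻¹ * x) * m y (y⁻¹ * x)
      = W φ₀ φ₃ y * (starRingEnd ℂ) (W φ₂ (U x φ₁) y) := by
    intro y
    have h1 : U y ∘L U (y⁻¹ * x) = m y (y⁻¹ * x) • U x := by
      rw [hproj]; congr 1; group
    have h2 : U (y⁻¹ * x) φ₁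
        = m y (y⁻¹ * x) • (adjoint (U y)) (U x φ₁) := by
      have h3 := congrArg (fun T : H →L[ℂ] H => adjoint (U y) ∘L T) h1
      rw [← ContinuousLinearMap.comp_assoc, (hunit y).1] at h3
      have h4 := congrArg (fun T : H →L[ℂ] H => T φ₁) h3
      simpa only [ContinuousLinearMap.comp_apply, ContinuousLinearMap.one_apply,
        ContinuousLinearMap.smul_apply, _root_.map_smul] using h4
    have hm1 : (starRingEnd ℂ) (m y (y⁻¹ * x)) * m y (y⁻¹ * x) = 1 := by
      rw [mul_comm, Complex.mul_conj]
      norm_cast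
      simp [Complex.normSq_eq_norm_sq, hnorm]
    rw [hW φ₁ φ₂ (y⁻¹ * x), hW φ₂ (U x φ₁) y, h2]
    rw [inner_smul_left, adjoint_inner_left]
    rw [inner_conj_symm]
    linear_combination W φ₀ φ₃ y * (inner ℂ ((U x) φ₁) ((U y) φ₂) : ℂ) * hm1
  calc ∫ y, W φ₀ φ₃ y * W φ₁ φ₂ (y⁻¹ * x) * m y (y⁻¹ * x) ∂μ
      = ∫ y, W φ₀ φ₃ y * (starRingEnd ℂ) (W φ₂ (U x φ₁) y) ∂μ := by
        exact integral_congr_ae (Filter.Eventually.of_forall key)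
    _ = (inner ℂ (U x φ₁) φ₃ : ℂ) * (inner ℂ φ₀ φ₂ : ℂ) := hGod φ₀ φ₂ φ₃ (U x φ₁)
    _ = (inner ℂ φ₀ φ₂ : ℂ) * W φ₁ φ₃ x := by rw [hW, mul_comm]
end

section
/- For a fixed nonzero window φ₀ ∈ H with W_{φ₀}(φ₀) ∈ L¹(Ξ), the wavelet transform of any f ∈ H with W_{φ₀}(f) ∈ L¹(Ξ) satisfies the reproducing formula W_{φ₀}(f) = (1/‖φ₀‖²) · W_{φ₀}(f) ∗' W_{φ₀}(φ₀). -/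
open MeasureTheory ContinuousLinearMap

/-- The reproducing formula for the wavelet transform:
`W_{φ₀}(f) = (1/‖φ₀‖²) · W_{φ₀}(f) ∗' W_{φ₀}(φ₀)`, assuming Godement's
orthogonality relation (with constant 1) and integrability of the relevant
wavelet transforms. Here `W ψ g x = ⟨g, U_x ψ⟩ = inner (U x ψ) g`. -/
theorem wavelet_reproducing_formula {Ξ : Type*} [CommGroup Ξ] [MeasurableSpace Ξ]
    {H : Type*} [NormedAddCommGroup H] [InnerProductSpace ℂ H] [CompleteSpace H]
    (μ : Measure Ξ)
    (m : Ξ → Ξ → ℂ) (hnorm : ∀ x y, ‖m x y‖ = 1)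
    (hcoc : ∀ x y z, m (x * y) z * m x y = m x (y * z) * m y z)
    (he : m 1 1 = 1) (hminv : ∀ x y, m x y = m x⁻¹ y⁻¹)
    (U : Ξ → H →L[ℂ] H)
    (hunit : ∀ x, adjoint (U x) ∘L U x = 1 ∧ U x ∘L adjoint (U x) = 1)
    (hproj : ∀ x y, U x ∘L U y = m x y • U (x * y))
    (W : H → H → Ξ → ℂ)
    (hW : ∀ ψ g x, W ψ g x = inner ℂ (U x ψ) g)
    (hGod : ∀ ψ₀ ψ₁ f g : H,
      ∫ x, W ψ₀ f x * (starRingEnd ℂ) (W ψ₁ g x) ∂μ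
        = (inner ℂ g f : ℂ) * (inner ℂ ψ₀ ψ₁ : ℂ))
    (φ₀ : H) (hφ₀ : φ₀ ≠ 0)
    (hφ₀int : Integrable (W φ₀ φ₀) μ)
    (f : H) (hfint : Integrable (W φ₀ f) μ)
    (hint : ∀ x : Ξ, Integrable
      (fun y => W φ₀ f y * W φ₀ φ₀ (y⁻¹ * x) * m y (y⁻¹ * x)) μ) :
    ∀ x : Ξ, W φ₀ f x
      = ((‖φ₀‖ : ℂ) ^ 2)⁻¹ * ∫ y, W φ₀ f y * W φ₀ φ₀ (y⁻¹ * x) * m y (y⁻¹ * x) ∂μ := by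
  intro x
  have hm : ∀ y z : Ξ, (starRingEnd ℂ) (m y z) * m y z = 1 := by
    intro y z
    have h := hnorm y z
    rw [mul_comm, Complex.mul_conj]
    norm_cast
    rw [Complex.normSq_eq_norm_sq, h]; norm_num
  have key : ∀ y : Ξ, W φ₀ f y * W φ₀ φ₀ (y⁻¹ * x) * m y (y⁻¹ * x)
      = W φ₀ f y * (starRingEnd ℂ) (W φ₀ (U x φ₀) y) := by
    intro y
    have h1 : U y ∘L U (y⁻¹ * x) = m y (y⁻¹ * x) • U (y * (y⁻¹ * x)) := hproj y (y⁻¹ * x)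
    have h2 : y * (y⁻¹ * x) = x := by group
    rw [h2] at h1
    have h3 : adjoint (U y) ((U y ∘L U (y⁻¹ * x)) φ₀)
        = m y (y⁻¹ * x) • adjoint (U y) (U x φ₀) := by
      rw [h1]; simp
    have h4 : adjoint (U y) ((U y ∘L U (y⁻¹ * x)) φ₀) = U (y⁻¹ * x) φ₀ := by
      have := congrArg (fun (A : H →L[ℂ] H) => A (U (y⁻¹ * x) φ₀)) (hunit y).1
      simpa using this
    have h5 : adjoint (U y) (U x φ₀)
        = (starRingEnd ℂ) (m y (y⁻¹ * x)) • U (y⁻¹ * x) φ₀ := by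
      have := h3.symm.trans h4
      rw [← this, smul_smul, hm, one_smul]
    have h6 : (starRingEnd ℂ) (W φ₀ (U x φ₀) y)
        = m y (y⁻¹ * x) * W φ₀ φ₀ (y⁻¹ * x) := by
      rw [hW, hW, inner_conj_symm, ← adjoint_inner_left, h5, inner_smul_left,
        starRingEnd_apply, starRingEnd_apply, star_star]
    rw [h6]; ring
  have hint2 : ∫ y, W φ₀ f y * W φ₀ φ₀ (y⁻¹ * x) * m y (y⁻¹ * x) ∂μ
      = ∫ y, W φ₀ f y * (starRingEnd ℂ) (W φ₀ (U x φ₀) y) ∂μ := by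
    exact integral_congr_ae (Filter.Eventually.of_forall key)
  rw [hint2, hGod φ₀ φ₀ f (U x φ₀)]
  rw [inner_self_eq_norm_sq_to_K, ← hW]
  have hn : (‖φ₀‖ : ℂ) ^ 2 ≠ 0 := by
    simpa using pow_ne_zero 2 (by exact_mod_cast norm_ne_zero_iff.mpr hφ₀ : (‖φ₀‖:ℂ) ≠ 0)
  field_simp
  simp [hφ₀]
end
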